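/- For any commutative ring R in which p is nilpotent and any n, m ≥ 0, the truncation map W_{n+m}(R) → W_n(R) of p-typical Witt vectors is surjective with nilpotent kernel. -/
import Mathlib

open Function

namespace WittAux

variable {p : ℕ} [hp : Fact p.Prime] {R : Type*} [CommRing R]

local notation "𝕎" => WittVector p

lemma vit_coeff_eq_zero (x : 𝕎 R) : ∀ j i : ℕ, i < j →
    (WittVector.verschiebung^[j] x).coeff i = 0 := by
  intro j
  induction j with
  | zero => intro i hi; omega
  | succ j ih =>
    intro i hi
    rw [Function.iterate_succ_apply']
    cases i with
    | zero => exact WittVector.verschiebung_coeff_zero _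
    | succ i =>
      rw [WittVector.verschiebung_coeff_succ]
      exact ih i (by omega)

lemma exists_vit (x : 𝕎 R) (j : ℕ) (hx : ∀ i < j, x.coeff i = 0) :
    ∃ a : 𝕎 R, WittVector.verschiebung^[j] a = x := by
  refine ⟨WittVector.mk p (fun i => x.coeff (i + j)), ?_⟩
  ext i
  rcases lt_or_ge i j with hij | hij
  · rw [vit_coeff_eq_zero _ j i hij, hx i hij]
  · obtain ⟨t, rfl⟩ : ∃ t, i = t + j := ⟨i - j, by omega⟩
    rw [WittVector.iterate_verschiebung_coeff]
    simp [WittVector.coeff_mk]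

lemma frob_iter_mul (j : ℕ) (x y : 𝕎 R) :
    WittVector.frobenius^[j] (x * y)
      = WittVector.frobenius^[j] x * WittVector.frobenius^[j] y := by
  induction j generalizing x y with
  | zero => simp
  | succ j ih => rw [Function.iterate_succ_apply, Function.iterate_succ_apply,
      Function.iterate_succ_apply, map_mul, ih]

lemma frob_iter_pow_p (j c : ℕ) :
    WittVector.frobenius^[j] ((p : 𝕎 R) ^ c) = (p : 𝕎 R) ^ c := by
  induction j with
  | zero => simp
  | succ j ih => rw [Function.iterate_succ_apply, map_pow, map_natCast, ih]

lemma frob_vit (j : ℕ) (b : 𝕎 R) :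
    WittVector.frobenius^[j] (WittVector.verschiebung^[j] b) = b * (p : 𝕎 R) ^ j := by
  induction j generalizing b with
  | zero => simp
  | succ j ih =>
    rw [Function.iterate_succ_apply' (f := WittVector.verschiebung),
      Function.iterate_succ_apply (f := ⇑WittVector.frobenius),
      WittVector.frobenius_verschiebung]
    have : (↑p : 𝕎 R) = (p : 𝕎 R) ^ 1 := (pow_one _).symm
    rw [this, frob_iter_mul, frob_iter_pow_p, ih, pow_one, mul_assoc, ← pow_succ]

lemma vit_mul_vit (j : ℕ) (a b : 𝕎 R) :
    WittVector.verschiebung^[j] a * WittVector.verschiebung^[j] b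
      = WittVector.verschiebung^[j] (a * b * (p : 𝕎 R) ^ j) := by
  rw [WittVector.iterate_verschiebung_mul_left, frob_vit, mul_assoc]

lemma vit_pow (j : ℕ) (a : 𝕎 R) : ∀ s : ℕ,
    (WittVector.verschiebung^[j] a) ^ (s + 1)
      = WittVector.verschiebung^[j] (a ^ (s + 1) * (p : 𝕎 R) ^ (j * s)) := by
  intro s
  induction s with
  | zero => simp
  | succ s ih =>
    rw [pow_succ, ih, vit_mul_vit]
    ring_nf

lemma coeff_zero_pow_p (j : ℕ) : ((p : 𝕎 R) ^ j).coeff 0 = (p : R) ^ j := by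
  have := map_pow (WittVector.constantCoeff (p := p) (R := R)) (p : 𝕎 R) j
  simpa using this

lemma p_pow_truncate (k : ℕ) (hk : (p : R) ^ (k + 1) = 0) (m : ℕ) :
    ∃ M : ℕ, WittVector.truncate m ((p : 𝕎 R) ^ M) = 0 := by
  induction m with
  | zero =>
    refine ⟨0, ?_⟩
    apply TruncatedWittVector.ext
    intro i
    exact i.elim0
  | succ m ih =>
    obtain ⟨M, hM⟩ := ih
    have hker : ∀ i < m, ((p : 𝕎 R) ^ M).coeff i = 0 :=
      (WittVector.mem_ker_truncate _ _).mp (by rwa [RingHom.mem_ker])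
    obtain ⟨a, ha⟩ := exists_vit ((p : 𝕎 R) ^ M) m hker
    refine ⟨M * (k + 1) + (k + 1), ?_⟩
    rw [← RingHom.mem_ker, WittVector.mem_ker_truncate]
    have key : (p : 𝕎 R) ^ (M * (k + 1) + (k + 1))
        = WittVector.verschiebung^[m] (a ^ (k + 1) * (p : 𝕎 R) ^ (m * k + (k + 1))) := by
      rw [pow_add, pow_mul, ← ha, vit_pow,
        WittVector.iterate_verschiebung_mul_left, frob_iter_pow_p, mul_assoc, ← pow_add]
    intro i hi
    rw [key]
    rcases lt_or_ge i m with him | him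
    · exact vit_coeff_eq_zero _ m i him
    · have he : i = m := by omega
      have hco := WittVector.iterate_verschiebung_coeff
        (a ^ (k + 1) * (p : 𝕎 R) ^ (m * k + (k + 1))) m 0
      rw [zero_add] at hco
      rw [he, hco, WittVector.mul_coeff_zero, coeff_zero_pow_p, pow_add (p : R) (m * k) (k + 1), hk, mul_zero, mul_zero]

end WittAux

namespace WittAux

variable {p : ℕ} [hp : Fact p.Prime] {R : Type*} [CommRing R]

local notation "𝕎" => WittVector p

lemma vit_zero (j : ℕ) : (WittVector.verschiebung^[j] (0 : 𝕎 R)) = 0 := by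
  induction j with
  | zero => rfl
  | succ j ih => rw [Function.iterate_succ_apply, map_zero, ih]

lemma vit_add (j : ℕ) (x y : 𝕎 R) :
    WittVector.verschiebung^[j] (x + y)
      = WittVector.verschiebung^[j] x + WittVector.verschiebung^[j] y := by
  induction j generalizing x y with
  | zero => rfl
  | succ j ih => rw [Function.iterate_succ_apply, Function.iterate_succ_apply,
      Function.iterate_succ_apply, map_add, ih]

/-- The ideal of elements of the form `V^j (a * p^(j*s))`. -/
def Dideal (j s : ℕ) : Ideal (𝕎 R) where
  carrier := {x | ∃ a : 𝕎 R, x = WittVector.verschiebung^[j] (a * (p : 𝕎 R) ^ (j * s))}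
  zero_mem' := ⟨0, by rw [zero_mul, vit_zero]⟩
  add_mem' := by
    rintro x y ⟨a, rfl⟩ ⟨b, rfl⟩
    exact ⟨a + b, by rw [add_mul, vit_add]⟩
  smul_mem' := by
    rintro r x ⟨a, rfl⟩
    refine ⟨WittVector.frobenius^[j] r * a, ?_⟩
    rw [smul_eq_mul, mul_comm, WittVector.iterate_verschiebung_mul_left]
    congr 1
    ring

lemma mem_Dideal_mul (j s : ℕ) (x y : 𝕎 R) (hx : x ∈ Dideal (p := p) (R := R) j s)
    (hy : ∀ i < j, y.coeff i = 0) : x * y ∈ Dideal (p := p) (R := R) j (s + 1) := by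
  obtain ⟨a, rfl⟩ := hx
  obtain ⟨b, rfl⟩ := exists_vit y j hy
  refine ⟨a * b, ?_⟩
  rw [vit_mul_vit]
  congr 1
  rw [Nat.mul_succ, pow_add]
  ring

end WittAux

open WittAux in
theorem truncation_surjective_nilpotent_kernel (p : ℕ) [Fact p.Prime] (R : Type*) [CommRing R]
    (h : ∃ k : ℕ, (p : R) ^ k = 0) (n m : ℕ) :
    Function.Surjective
        (TruncatedWittVector.truncate (p := p) (R := R)
          (show n + 1 ≤ n + m + 1 by omega)) ∧
      ∃ N : ℕ,
        (RingHom.ker (TruncatedWittVector.truncate (p := p) (R := R)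
          (show n + 1 ≤ n + m + 1 by omega))) ^ N = ⊥ := by
  constructor
  · exact TruncatedWittVector.truncate_surjective _
  · obtain ⟨k, hk⟩ := h
    have hk' : (p : R) ^ (k + 1) = 0 := by rw [pow_succ, hk, zero_mul]
    obtain ⟨M, hM⟩ := p_pow_truncate (p := p) (R := R) k hk' m
    set j := n + 1
    set len := n + m + 1
    set π := WittVector.truncate (p := p) (R := R) len with hπ
    set Tr := TruncatedWittVector.truncate (p := p) (R := R)
      (show n + 1 ≤ n + m + 1 by omega) with hTr
    set Jker := RingHom.ker (WittVector.truncate (p := p) (R := R) j) with hJker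
    -- step 1 : powers of Jker land in Dideal
    have step1 : ∀ s : ℕ, Jker ^ (s + 1) ≤ Dideal (p := p) (R := R) j s := by
      intro s
      induction s with
      | zero =>
        rw [pow_one]
        intro x hx
        obtain ⟨a, rfl⟩ := exists_vit x j ((WittVector.mem_ker_truncate _ _).mp hx)
        exact ⟨a, by rw [Nat.mul_zero, pow_zero, mul_one]⟩
      | succ s ih =>
        rw [pow_succ]
        rw [Ideal.mul_le]
        intro r hr x hx
        exact mem_Dideal_mul j s r x (ih hr) ((WittVector.mem_ker_truncate _ _).mp hx)
    -- step 2 : Dideal j M is inside the kernel of π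
    have step2 : Dideal (p := p) (R := R) j M ≤ RingHom.ker π := by
      rintro x ⟨a, rfl⟩
      rw [WittVector.mem_ker_truncate]
      intro i hi
      rcases lt_or_ge i j with hij | hij
      · exact vit_coeff_eq_zero _ j i hij
      · obtain ⟨t, rfl⟩ : ∃ t, i = t + j := ⟨i - j, by omega⟩
        rw [WittVector.iterate_verschiebung_coeff]
        have ht : t < m := by omega
        have hzero : WittVector.truncate (p := p) (R := R) m
            (a * (p : WittVector p R) ^ (j * M)) = 0 := by
          have hjM : j * M = M + (j * M - M) := by
            have : M ≤ j * M := Nat.le_mul_of_pos_left M (by omega)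
            omega
          rw [map_mul, hjM, pow_add, map_mul, hM, zero_mul, mul_zero]
        exact (WittVector.mem_ker_truncate _ _).mp (by rwa [RingHom.mem_ker]) t ht
    -- step 3 : assemble
    refine ⟨M + 1, ?_⟩
    have hsurj : Function.Surjective π := WittVector.truncate_surjective p len R
    have hcomap : Ideal.comap π (RingHom.ker Tr) = Jker := by
      ext x
      simp only [Ideal.mem_comap, RingHom.mem_ker, hJker]
      rw [hTr, TruncatedWittVector.truncate_wittVector_truncate]
    have hI : RingHom.ker Tr = Ideal.map π Jker := by
      rw [← hcomap, Ideal.map_comap_of_surjective π hsurj]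
    rw [hI, ← Ideal.map_pow]
    rw [← le_bot_iff]
    rw [Ideal.map_le_iff_le_comap]
    exact le_trans (step1 M) (le_trans step2 le_rfl)
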